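/- Define the array U recursively by: U(r, 0) = 1 for r ∈ {1,…,3n}; U(1, j) = (p_1/μ^c_1)^j for j ∈ {0,…,m}; U(r, j) = U(r−1, j) + (p_r/μ^c_r) · U(r, j−1) for r ∈ {2,…,n} and j ∈ {1,…,m}; U(r, j) = Σ_{k=0}^{j} (1/k!) (p_{r−n}/μ^d_{r−n})^k · U(r−1, j−k) for r ∈ {n+1,…,2n} and j ∈ {1,…,m}; and U(r, j) = Σ_{k=0}^{j} (1/k!) (p_{r−2n}/μ^u_{r−2n})^k · U(r−1, j−k) for r ∈ {2n+1,…,3n} and j ∈ {1,…,m}. Then Z(j) = U(3n, j) for every j ∈ {0, 1, …, m}. -/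

import Mathlib

open scoped BigOperators

/-- A state of the closed queueing network: numbers of tasks at each client's
downlink (`d`), computation (`c`), and uplink (`u`) servers. -/
structure St (n : ℕ) where
  d : Fin n → ℕ
  c : Fin n → ℕ
  u : Fin n → ℕ

namespace St

variable {n : ℕ}

/-- Total number of tasks in a state. -/
def total (x : St n) : ℕ := ∑ i, (x.d i + x.c i + x.u i)

/-- Product-form weight of a state. -/
noncomputable def w (p μc μd μu : Fin n → ℝ) (x : St n) : ℝ :=
  ∏ i,
    (p i / μc i) ^ x.c i *
      ((p i / μd i) ^ x.d i / (Nat.factorial (x.d i) : ℝ)) *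
      ((p i / μu i) ^ x.u i / (Nat.factorial (x.u i) : ℝ))

/-- Normalizing constant `Z(k)` (it vanishes for `k < 0`). -/
noncomputable def Z (p μc μd μu : Fin n → ℝ) (k : ℤ) : ℝ :=
  ∑' x : St n, if (total x : ℤ) = k then w p μc μd μu x else 0

/-- Product-form distribution `π_k`. -/
noncomputable def pd (p μc μd μu : Fin n → ℝ) (k : ℤ) (x : St n) : ℝ :=
  w p μc μd μu x / Z p μc μd μu k

/-- Expectation of `f` under the product-form distribution `π_k`. -/
noncomputable def Epi (p μc μd μu : Fin n → ℝ) (k : ℤ) (f : St n → ℝ) : ℝ :=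
  ∑' x : St n, if (total x : ℤ) = k then f x * pd p μc μd μu k x else 0

end St

open St

namespace BuzenAux
open Finset


variable {n : ℕ}

/-- Per-coordinate factor. -/
noncomputable def Fc (p μc μd μu : Fin n → ℝ) (r k : ℕ) : ℝ :=
  if h : r < n then (p ⟨r, h⟩ / μc ⟨r, h⟩) ^ k
  else if h2 : r < 2 * n then (p ⟨r - n, by omega⟩ / μd ⟨r - n, by omega⟩) ^ k / (Nat.factorial k : ℝ)
  else if h3 : r < 3 * n then (p ⟨r - 2 * n, by omega⟩ / μu ⟨r - 2 * n, by omega⟩) ^ k / (Nat.factorial k : ℝ)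
  else 1

lemma Fc_zero (p μc μd μu : Fin n → ℝ) (r : ℕ) : Fc p μc μd μu r 0 = 1 := by
  unfold Fc
  split_ifs <;> simp

/-- Partial normalizing sums. -/
noncomputable def S (p μc μd μu : Fin n → ℝ) (r j : ℕ) : ℝ :=
  ∑ y ∈ Finset.finAntidiagonal r j, ∏ i : Fin r, Fc p μc μd μu (i : ℕ) (y i)

lemma finAntidiagonal_zero' (r : ℕ) : Finset.finAntidiagonal r (0 : ℕ) = {0} := by
  ext y
  simp [Finset.mem_finAntidiagonal, Finset.sum_eq_zero_iff, funext_iff]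

lemma S_zero (p μc μd μu : Fin n → ℝ) (r : ℕ) : S p μc μd μu r 0 = 1 := by
  simp [S, finAntidiagonal_zero', Fc_zero]

lemma S_nil (p μc μd μu : Fin n → ℝ) (j : ℕ) :
    S p μc μd μu 0 j = if j = 0 then 1 else 0 := by
  rcases j with _ | j
  · simp [S_zero]
  · have h : Finset.finAntidiagonal 0 (j + 1) = (∅ : Finset (Fin 0 → ℕ)) := by
      ext y; simp [Finset.mem_finAntidiagonal]
    simp [S, h]

lemma S_succ (p μc μd μu : Fin n → ℝ) (r j : ℕ) :
    S p μc μd μu (r + 1) j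
      = ∑ k ∈ Finset.range (j + 1), Fc p μc μd μu r k * S p μc μd μu r (j - k) := by
  have hs : ∑ k ∈ Finset.range (j + 1), Fc p μc μd μu r k * S p μc μd μu r (j - k)
      = ∑ q ∈ (Finset.range (j + 1)).sigma (fun k => Finset.finAntidiagonal r (j - k)),
          Fc p μc μd μu r q.1 * ∏ i : Fin r, Fc p μc μd μu (i : ℕ) (q.2 i) := by
    rw [Finset.sum_sigma]
    simp [S, Finset.mul_sum]
  rw [hs, S]
  refine Finset.sum_nbij' (fun y => ⟨y (Fin.last r), Fin.init y⟩)
    (fun q => Fin.snoc q.2 q.1) ?_ ?_ ?_ ?_ ?_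
  · intro y hy
    simp only [Finset.mem_finAntidiagonal] at hy
    have hsum : (∑ i : Fin r, Fin.init y i) + y (Fin.last r) = j := by
      rw [Fin.sum_univ_castSucc] at hy
      simpa [Fin.init] using hy
    simp only [Finset.mem_sigma, Finset.mem_range, Finset.mem_finAntidiagonal]
    constructor
    · omega
    · omega
  · rintro ⟨k, z⟩ hq
    simp only [Finset.mem_sigma, Finset.mem_range, Finset.mem_finAntidiagonal] at hq
    simp only [Finset.mem_finAntidiagonal, Fin.sum_univ_castSucc, Fin.snoc_castSucc,
      Fin.snoc_last]
    omega
  · intro y hy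
    simp [Fin.snoc_init_self]
  · rintro ⟨k, z⟩ hq
    simp [Fin.init_snoc]
  · intro y hy
    simp only [Fin.prod_univ_castSucc, Fin.coe_castSucc, Fin.val_last, Fin.init]
    ring



variable {n : ℕ}

/-- Decode a tuple into a state. -/
def dec (y : Fin (3 * n) → ℕ) : St n where
  d := fun i => y ⟨n + i, by have := i.isLt; omega⟩
  c := fun i => y ⟨i, by have := i.isLt; omega⟩
  u := fun i => y ⟨2 * n + i, by have := i.isLt; omega⟩

/-- Encode a state as a tuple. -/
def enc (x : St n) (r : Fin (3 * n)) : ℕ :=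
  if h : (r : ℕ) < n then x.c ⟨r, h⟩
  else if h2 : (r : ℕ) < 2 * n then x.d ⟨(r : ℕ) - n, by omega⟩
  else x.u ⟨(r : ℕ) - 2 * n, by have := r.isLt; omega⟩

lemma enc_dec (y : Fin (3 * n) → ℕ) : enc (dec y) = y := by
  funext r
  unfold enc dec
  split_ifs with h h2
  · exact congrArg y (Fin.ext rfl)
  · exact congrArg y (Fin.ext (by simp only [Fin.val_mk]; omega))
  · exact congrArg y (Fin.ext (by simp only [Fin.val_mk]; have := r.isLt; omega))

lemma dec_enc (x : St n) : dec (enc x) = x := by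
  obtain ⟨d, c, u⟩ := x
  unfold dec enc
  simp only [St.mk.injEq]
  refine ⟨?_, ?_, ?_⟩ <;> funext i
  · rw [dif_neg (show ¬ (n + (i : ℕ) < n) by omega),
      dif_pos (show n + (i : ℕ) < 2 * n by have := i.isLt; omega)]
    exact congrArg d (Fin.ext (by simp only [Fin.val_mk]; omega))
  · rw [dif_pos (show (i : ℕ) < n from i.isLt)]
  · rw [dif_neg (show ¬ (2 * n + (i : ℕ) < n) by omega),
      dif_neg (show ¬ (2 * n + (i : ℕ) < 2 * n) by omega)]
    exact congrArg u (Fin.ext (by simp only [Fin.val_mk]; omega))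

lemma prod_blocks {M : Type*} [CommMonoid M] (f : Fin (3 * n) → M) :
    ∏ i, f i =
      ((∏ i : Fin n, f ⟨(i : ℕ), by have := i.isLt; omega⟩) *
        ∏ i : Fin n, f ⟨n + (i : ℕ), by have := i.isLt; omega⟩) *
        ∏ i : Fin n, f ⟨2 * n + (i : ℕ), by have := i.isLt; omega⟩ := by
  have h3 : n + (n + n) = 3 * n := by ring
  rw [(Fintype.prod_equiv (finCongr h3) (fun i => f (finCongr h3 i)) f (fun i => rfl)).symm]
  rw [Fin.prod_univ_add, Fin.prod_univ_add, ← mul_assoc]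
  refine congrArg₂ (· * ·) (congrArg₂ (· * ·) ?_ ?_) ?_
  · exact Finset.prod_congr rfl fun i _ => congrArg f (Fin.ext (by simp))
  · exact Finset.prod_congr rfl fun i _ => congrArg f (Fin.ext (by simp))
  · exact Finset.prod_congr rfl fun i _ => congrArg f (Fin.ext (by simp; omega))

lemma sum_blocks (f : Fin (3 * n) → ℕ) :
    ∑ i, f i =
      ((∑ i : Fin n, f ⟨(i : ℕ), by have := i.isLt; omega⟩) +
        ∑ i : Fin n, f ⟨n + (i : ℕ), by have := i.isLt; omega⟩) +
        ∑ i : Fin n, f ⟨2 * n + (i : ℕ), by have := i.isLt; omega⟩ := by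
  have h3 : n + (n + n) = 3 * n := by ring
  rw [(Fintype.sum_equiv (finCongr h3) (fun i => f (finCongr h3 i)) f (fun i => rfl)).symm]
  rw [Fin.sum_univ_add, Fin.sum_univ_add, ← add_assoc]
  refine congrArg₂ (· + ·) (congrArg₂ (· + ·) ?_ ?_) ?_
  · exact Finset.sum_congr rfl fun i _ => congrArg f (Fin.ext (by simp))
  · exact Finset.sum_congr rfl fun i _ => congrArg f (Fin.ext (by simp))
  · exact Finset.sum_congr rfl fun i _ => congrArg f (Fin.ext (by simp; omega))

lemma sum_dec (y : Fin (3 * n) → ℕ) : total (dec y) = ∑ i, y i := by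
  rw [sum_blocks y, total]
  simp only [dec, Finset.sum_add_distrib]
  ring

lemma prod_Fc_dec (p μc μd μu : Fin n → ℝ) (y : Fin (3 * n) → ℕ) :
    (∏ i : Fin (3 * n), Fc p μc μd μu (i : ℕ) (y i)) = w p μc μd μu (dec y) := by
  rw [prod_blocks (fun i => Fc p μc μd μu (i : ℕ) (y i)), w]
  simp only [Finset.prod_mul_distrib]
  refine congrArg₂ (· * ·) (congrArg₂ (· * ·) ?_ ?_) ?_
  · apply Finset.prod_congr rfl
    intro i _
    unfold Fc dec
    rw [dif_pos (show (i : ℕ) < n from i.isLt)]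
  · apply Finset.prod_congr rfl
    intro i _
    unfold Fc dec
    rw [dif_neg (show ¬ (n + (i : ℕ) < n) by omega),
      dif_pos (show n + (i : ℕ) < 2 * n by have := i.isLt; omega)]
    have hni : n + (i : ℕ) - n = (i : ℕ) := by omega
    simp only [hni, Fin.eta]
  · apply Finset.prod_congr rfl
    intro i _
    unfold Fc dec
    rw [dif_neg (show ¬ (2 * n + (i : ℕ) < n) by omega),
      dif_neg (show ¬ (2 * n + (i : ℕ) < 2 * n) by omega),
      dif_pos (show 2 * n + (i : ℕ) < 3 * n by have := i.isLt; omega)]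
    have hni : 2 * n + (i : ℕ) - 2 * n = (i : ℕ) := by omega
    simp only [hni, Fin.eta]

lemma Z_eq_S (p μc μd μu : Fin n → ℝ) (j : ℕ) :
    Z p μc μd μu (j : ℤ) = S p μc μd μu (3 * n) j := by
  classical
  have hinj : Function.Injective (dec (n := n)) := fun a b h => by
    have := congrArg enc h
    rwa [enc_dec, enc_dec] at this
  rw [Z, tsum_eq_sum (s := (Finset.finAntidiagonal (3 * n) j).image dec) ?_]
  · rw [Finset.sum_image (fun a _ b _ h => hinj h), S]
    apply Finset.sum_congr rfl
    intro y hy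
    rw [Finset.mem_finAntidiagonal] at hy
    rw [if_pos (by rw [sum_dec, hy]), prod_Fc_dec]
  · intro x hx
    rw [if_neg]
    intro hcontra
    have ht : total x = j := by exact_mod_cast hcontra
    exact hx (Finset.mem_image.mpr ⟨enc x, by
      rw [Finset.mem_finAntidiagonal, ← sum_dec, dec_enc, ht], dec_enc x⟩)

end BuzenAux

/-- Buzen's recursive algorithm computes the normalization constants:
if `U` satisfies the recursion, then `Z(j) = U(3n, j)` for every `j ∈ {0,…,m}`. -/
theorem stmt3 (n m : ℕ) (hn : 1 ≤ n) (hm : 1 ≤ m)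
    (p μc μd μu : Fin n → ℝ)
    (hp : ∀ i, 0 < p i)
    (hμc : ∀ i, 0 < μc i) (hμd : ∀ i, 0 < μd i) (hμu : ∀ i, 0 < μu i)
    (U : ℕ → ℕ → ℝ)
    (h0 : ∀ r, 1 ≤ r → r ≤ 3 * n → U r 0 = 1)
    (h1 : ∀ j ≤ m, U 1 j = (p ⟨0, hn⟩ / μc ⟨0, hn⟩) ^ j)
    (hc : ∀ i : Fin n, 1 ≤ (i : ℕ) → ∀ j, 1 ≤ j → j ≤ m →
      U ((i : ℕ) + 1) j = U (i : ℕ) j + (p i / μc i) * U ((i : ℕ) + 1) (j - 1))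
    (hd : ∀ i : Fin n, ∀ j, 1 ≤ j → j ≤ m →
      U (n + (i : ℕ) + 1) j =
        ∑ k ∈ Finset.range (j + 1),
          (1 / (Nat.factorial k : ℝ)) * (p i / μd i) ^ k * U (n + (i : ℕ)) (j - k))
    (hu : ∀ i : Fin n, ∀ j, 1 ≤ j → j ≤ m →
      U (2 * n + (i : ℕ) + 1) j =
        ∑ k ∈ Finset.range (j + 1),
          (1 / (Nat.factorial k : ℝ)) * (p i / μu i) ^ k * U (2 * n + (i : ℕ)) (j - k)) :
    ∀ j ≤ m, Z p μc μd μu (j : ℤ) = U (3 * n) j := by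
  have key : ∀ r, 1 ≤ r → r ≤ 3 * n → ∀ j ≤ m, U r j = BuzenAux.S p μc μd μu r j := by
    intro r
    induction r with
    | zero => omega
    | succ r ih =>
      intro _ hr3 j hj
      rcases Nat.eq_zero_or_pos r with rfl | hrpos
      · -- base: r + 1 = 1
        rw [h1 j hj, BuzenAux.S_succ]
        rw [Finset.sum_eq_single j]
        · rw [Nat.sub_self, BuzenAux.S_zero, mul_one]
          unfold BuzenAux.Fc
          rw [dif_pos (show 0 < n from hn)]
        · intro k hk hkj
          rw [BuzenAux.S_nil, if_neg (by simp only [Finset.mem_range] at hk; omega), mul_zero]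
        · intro h
          exact absurd (Finset.self_mem_range_succ j) h
      · rcases Nat.eq_zero_or_pos j with rfl | hjpos
        · rw [h0 (r + 1) (by omega) hr3, BuzenAux.S_zero]
        by_cases hrn : r < n
        · -- computation block
          have ihr := ih (by omega) (by omega)
          set i : Fin n := ⟨r, hrn⟩ with hidef
          have hFc : ∀ k, BuzenAux.Fc p μc μd μu r k = (p i / μc i) ^ k := fun k => by
            unfold BuzenAux.Fc; rw [dif_pos hrn]
          have hcr := hc i (by rw [hidef]; exact hrpos)
          simp only [hidef] at hcr
          have inner : ∀ j ≤ m, U (r + 1) j = BuzenAux.S p μc μd μu (r + 1) j := by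
            intro j
            induction j with
            | zero => intro _; rw [h0 (r + 1) (by omega) hr3, BuzenAux.S_zero]
            | succ j ihj =>
              intro hjm
              have expand : BuzenAux.S p μc μd μu (r + 1) (j + 1)
                  = BuzenAux.S p μc μd μu r (j + 1)
                    + (p i / μc i) * BuzenAux.S p μc μd μu (r + 1) j := by
                rw [BuzenAux.S_succ p μc μd μu r (j + 1), BuzenAux.S_succ p μc μd μu r j,
                  Finset.sum_range_succ']
                simp only [hFc, Nat.succ_sub_succ, pow_zero, one_mul, Nat.sub_zero,
                  Finset.mul_sum]
                rw [add_comm]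
                congr 1
                apply Finset.sum_congr rfl
                intro k _
                ring
              rw [hcr (j + 1) (by omega) hjm, ihr (j + 1) hjm, Nat.add_sub_cancel,
                ihj (by omega), expand]
          exact inner j hj
        · by_cases hr2n : r < 2 * n
          · -- downlink block
            have ihr := ih (by omega) (by omega)
            set i : Fin n := ⟨r - n, by omega⟩ with hidef
            have hri : n + (i : ℕ) = r := by simp [hidef]; omega
            have hFd : ∀ k, BuzenAux.Fc p μc μd μu r k
                = (p i / μd i) ^ k / (Nat.factorial k : ℝ) := fun k => by
              unfold BuzenAux.Fc; rw [dif_neg (by omega), dif_pos hr2n]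
            have := hd i j (by omega) hj
            rw [hri] at this
            rw [this, BuzenAux.S_succ]
            refine Finset.sum_congr rfl fun k hk => ?_
            rw [ihr (j - k) (by omega), hFd k]
            ring
          · -- uplink block
            have ihr := ih (by omega) (by omega)
            set i : Fin n := ⟨r - 2 * n, by omega⟩ with hidef
            have hri : 2 * n + (i : ℕ) = r := by simp [hidef]; omega
            have hFu : ∀ k, BuzenAux.Fc p μc μd μu r k
                = (p i / μu i) ^ k / (Nat.factorial k : ℝ) := fun k => by
              unfold BuzenAux.Fc; rw [dif_neg (by omega), dif_neg hr2n, dif_pos (by omega)]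
            have := hu i j (by omega) hj
            rw [hri] at this
            rw [this, BuzenAux.S_succ]
            refine Finset.sum_congr rfl fun k hk => ?_
            rw [ihr (j - k) (by omega), hFu k]
            ring
  intro j hj
  rw [BuzenAux.Z_eq_S, key (3 * n) (by omega) le_rfl j hj]
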